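/- arXiv:1703.00945 — 3 statements merged into one kernel-verified Lean document; each statement's English description precedes it below -/
import Mathlib

section
/- (Edmonds–Fulkerson) For every clutter M, b(b(M)) = M, i.e., the blocker operation is an involution on clutters. -/
open Set

/-- A clutter: a finite ground set together with an antichain of subsets (rows). -/
structure Clutter (α : Type*) where
  E : Set α
  E_finite : E.Finite
  rows : Set (Set α)
  rows_subset : ∀ A ∈ rows, A ⊆ E
  antichain : ∀ A ∈ rows, ∀ B ∈ rows, A ⊆ B → A = B

variable {α : Type*}

/-- Deletion of an element of a clutter. -/
def Clutter.delete (M : Clutter α) (v : α) : Clutter α where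
  E := M.E \ {v}
  E_finite := M.E_finite.diff
  rows := {A | A ∈ M.rows ∧ v ∉ A}
  rows_subset := fun A hA => subset_diff_singleton (M.rows_subset A hA.1) hA.2
  antichain := fun A hA B hB h => M.antichain A hA.1 B hB.1 h

/-- Contraction of an element of a clutter. -/
def Clutter.contract (M : Clutter α) (v : α) : Clutter α where
  E := M.E \ {v}
  E_finite := M.E_finite.diff
  rows := {A | A ∈ (fun B => B \ {v}) '' M.rows ∧
    ∀ B ∈ (fun B => B \ {v}) '' M.rows, B ⊆ A → B = A}
  rows_subset := by
    rintro A ⟨⟨B, hB, rfl⟩, -⟩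
    exact diff_subset_diff_left (M.rows_subset B hB)
  antichain := fun A hA B hB hAB => hB.2 A hA.1 hAB

/-- A separation of a clutter: a partition of the ground set into two non-empty
parts such that every row lies in one of the parts. -/
def Clutter.IsSeparation (M : Clutter α) (X Y : Set α) : Prop :=
  X.Nonempty ∧ Y.Nonempty ∧ Disjoint X Y ∧ X ∪ Y = M.E ∧
    ∀ A ∈ M.rows, A ⊆ X ∨ A ⊆ Y

/-- A clutter is connected if it admits no separation. -/
def Clutter.Connected (M : Clutter α) : Prop := ¬ ∃ X Y, M.IsSeparation X Y
/-- A transversal (blocking set): a subset of the ground set meeting every row. -/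
def Clutter.IsTransversal (M : Clutter α) (B : Set α) : Prop :=
  B ⊆ M.E ∧ ∀ A ∈ M.rows, (B ∩ A).Nonempty

/-- The blocker of a clutter: rows are the inclusion-minimal transversals. -/
def Clutter.blocker (M : Clutter α) : Clutter α where
  E := M.E
  E_finite := M.E_finite
  rows := {B | M.IsTransversal B ∧ ∀ C, M.IsTransversal C → C ⊆ B → C = B}
  rows_subset := fun B hB => hB.1.1
  antichain := fun A hA B hB h => hB.2 A hA.1 h



lemma Clutter.exists_min_trans (M : Clutter α) {B : Set α} (hB : M.IsTransversal B) :
    ∃ C ∈ M.blocker.rows, C ⊆ B := by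
  have hfin : {C | M.IsTransversal C ∧ C ⊆ B}.Finite :=
    M.E_finite.finite_subsets.subset (fun C hC => hC.1.1)
  obtain ⟨C, hC, hmin⟩ := Set.Finite.exists_minimalFor id _ hfin ⟨B, hB, subset_rfl⟩
  refine ⟨C, ⟨hC.1, fun D hD hDC => subset_antisymm hDC (@hmin D ⟨hD, hDC.trans hC.2⟩ hDC)⟩, hC.2⟩

lemma Clutter.blocker_transversal_iff (M : Clutter α) (B : Set α) :
    M.blocker.IsTransversal B ↔ B ⊆ M.E ∧ ∃ A ∈ M.rows, A ⊆ B := by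
  constructor
  · rintro ⟨hBE, hmeet⟩
    refine ⟨hBE, ?_⟩
    by_contra h
    push_neg at h
    have htr : M.IsTransversal (M.E \ B) := by
      refine ⟨Set.diff_subset, fun A hA => ?_⟩
      obtain ⟨x, hxA, hxB⟩ := Set.not_subset.1 (h A hA)
      exact ⟨x, ⟨M.rows_subset A hA hxA, hxB⟩, hxA⟩
    obtain ⟨C, hC, hCsub⟩ := M.exists_min_trans htr
    obtain ⟨x, hxB, hxC⟩ := hmeet C hC
    exact (hCsub hxC).2 hxB
  · rintro ⟨hBE, A, hA, hAB⟩
    refine ⟨hBE, fun C hC => ?_⟩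
    obtain ⟨x, hxC, hxA⟩ := hC.1.2 A hA
    exact ⟨x, hAB hxA, hxC⟩

lemma Clutter.ext' {M N : Clutter α} (hE : M.E = N.E) (hr : M.rows = N.rows) : M = N := by
  cases M; cases N; simp_all

theorem blocker_blocker (M : Clutter α) : M.blocker.blocker = M := by
  refine Clutter.ext' rfl ?_
  ext B
  constructor
  · rintro ⟨hBt, hBmin⟩
    obtain ⟨hBE, A, hA, hAB⟩ := (M.blocker_transversal_iff B).1 hBt
    have hAB' : A = B := hBmin A ((M.blocker_transversal_iff A).2
      ⟨M.rows_subset A hA, A, hA, subset_rfl⟩) hAB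
    exact hAB' ▸ hA
  · intro hB
    refine ⟨(M.blocker_transversal_iff B).2 ⟨M.rows_subset B hB, B, hB, subset_rfl⟩, ?_⟩
    intro C hC hCB
    obtain ⟨hCE, A, hA, hAC⟩ := (M.blocker_transversal_iff C).1 hC
    have hA' := M.antichain A hA B hB (hAC.trans hCB)
    exact subset_antisymm hCB (hA' ▸ hAC)
end

section
/- Let M be a connected clutter with twin elements v and v' (v ≠ v'). Then M / v is a connected clutter. -/
open Set

variable {α : Type*}

theorem contract_twin_connected (M : Clutter α) (v v' : α) (hv : v ∈ M.E)
    (hv' : v' ∈ M.E) (hne : v ≠ v')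
    (htwin : {A ∈ M.rows | v ∈ A} = {A ∈ M.rows | v' ∈ A})
    (hM : M.Connected) : (M.contract v).Connected := by
  rintro ⟨X, Y, hX, hY, hdisj, hunion, hrows⟩
  apply hM
  have tw1 : ∀ A ∈ M.rows, v ∈ A → v' ∈ A := fun A hA h =>
    (htwin.subset (⟨hA, h⟩ : A ∈ {A ∈ M.rows | v ∈ A})).2
  have tw2 : ∀ A ∈ M.rows, v' ∈ A → v ∈ A := fun A hA h =>
    (htwin.symm.subset (⟨hA, h⟩ : A ∈ {A ∈ M.rows | v' ∈ A})).2
  -- Key: for every row A of M, A \ {v} is a row of M.contract v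
  have key : ∀ A ∈ M.rows, A \ {v} ∈ (M.contract v).rows := by
    intro A hA
    refine ⟨⟨A, hA, rfl⟩, ?_⟩
    rintro B ⟨C, hC, rfl⟩ hsub
    have hCA : C = A := by
      apply M.antichain C hC A hA
      by_cases hvA : v ∈ A
      · intro x hx
        by_cases hxv : x = v
        · exact hxv ▸ hvA
        · exact (hsub ⟨hx, hxv⟩).1
      · by_cases hvC : v ∈ C
        · exfalso
          have hv'C : v' ∈ C := tw1 C hC hvC
          have hv'A : v' ∈ A := (hsub ⟨hv'C, Ne.symm hne⟩).1
          exact hvA (tw2 A hA hv'A)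
        · intro x hx
          exact (hsub ⟨hx, fun h => hvC (h ▸ hx)⟩).1
    rw [hCA]
  have hcE : (M.contract v).E = M.E \ {v} := rfl
  rw [hcE] at hunion
  have hvY : v ∉ Y := fun h => (hunion.subset (Or.inr h : v ∈ X ∪ Y)).2 rfl
  have hvX : v ∉ X := fun h => (hunion.subset (Or.inl h : v ∈ X ∪ Y)).2 rfl
  have hv'XY : v' ∈ X ∪ Y := hunion.symm.subset (⟨hv', Ne.symm hne⟩ : v' ∈ M.E \ {v})
  have hunion' : (X ∪ Y) ∪ {v} = M.E := by
    rw [hunion, diff_union_self, union_eq_self_of_subset_right (singleton_subset_iff.2 hv)]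
  rcases hv'XY with hv'X | hv'Y
  · refine ⟨X ∪ {v}, Y, ⟨v, Or.inr rfl⟩, hY, ?_, ?_, ?_⟩
    · exact disjoint_union_left.2 ⟨hdisj, disjoint_singleton_left.2 hvY⟩
    · rw [union_right_comm, hunion']
    · intro A hA
      rcases hrows (A \ {v}) (key A hA) with h | h
      · left
        intro x hx
        by_cases hxv : x = v
        · exact Or.inr hxv
        · exact Or.inl (h ⟨hx, hxv⟩)
      · right
        intro x hx
        by_cases hxv : x = v
        · exfalso
          have hv'A : v' ∈ A := tw1 A hA (hxv ▸ hx)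
          exact (disjoint_left.1 hdisj hv'X) (h ⟨hv'A, Ne.symm hne⟩)
        · exact h ⟨hx, hxv⟩
  · refine ⟨X, Y ∪ {v}, hX, ⟨v, Or.inr rfl⟩, ?_, ?_, ?_⟩
    · exact disjoint_union_right.2 ⟨hdisj, disjoint_singleton_right.2 hvX⟩
    · rw [← union_assoc, hunion']
    · intro A hA
      rcases hrows (A \ {v}) (key A hA) with h | h
      · left
        intro x hx
        by_cases hxv : x = v
        · exfalso
          have hv'A : v' ∈ A := tw1 A hA (hxv ▸ hx)
          exact (disjoint_right.1 hdisj hv'Y) (h ⟨hv'A, Ne.symm hne⟩)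
        · exact h ⟨hx, hxv⟩
      · right
        intro x hx
        by_cases hxv : x = v
        · exact Or.inr hxv
        · exact Or.inl (h ⟨hx, hxv⟩)
end

section
/- Let N be a matroid that is not connected and whose dual N* has no circuits of size less than three, and let M be the clutter of circuits of N. Then M is not a connected clutter, but its blocker b(M) is a connected clutter. Consequently, clutter connectivity is not invariant under taking blockers. -/
open Set
open scoped Matroid

variable {α : Type*}

/-- A circuit of a matroid: a minimal dependent set. -/
def Matroid.IsCircuit' (N : Matroid α) (C : Set α) : Prop := Minimal N.Dep C

/-- The clutter of circuits of a matroid with finite ground set. -/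
def circuitClutter (N : Matroid α) (hE : N.E.Finite) : Clutter α where
  E := N.E
  E_finite := hE
  rows := {C | N.IsCircuit' C}
  rows_subset := fun C hC => hC.1.2
  antichain := fun A hA B hB h => Set.Subset.antisymm h (hB.2 hA.1 h)

/-- A separation of a matroid: a partition of the ground set into two non-empty
parts such that every circuit lies in one of the parts. -/
def Matroid.Separation (N : Matroid α) (X Y : Set α) : Prop :=
  X.Nonempty ∧ Y.Nonempty ∧ Disjoint X Y ∧ X ∪ Y = N.E ∧
    ∀ C, N.IsCircuit' C → C ⊆ X ∨ C ⊆ Y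

/-- A matroid is connected if it admits no separation. -/
def Matroid.Connected (N : Matroid α) : Prop := ¬ ∃ X Y, N.Separation X Y

/-- Deletion of a single element from a matroid. -/
def Matroid.deleteElem (N : Matroid α) (v : α) : Matroid α := N ↾ (N.E \ {v})

/-- Contraction of a single element of a matroid, defined by duality. -/
def Matroid.contractElem (N : Matroid α) (v : α) : Matroid α := ((N✶ ↾ (N.E \ {v}))✶)


/-- In a matroid with finite ground set, every dependent set contains a circuit. -/
lemma exists_circuit_subset_of_dep (M : Matroid α) (hE : M.E.Finite) {D : Set α}
    (hD : M.Dep D) : ∃ C ⊆ D, M.IsCircuit' C := by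
  have hS : {C | C ⊆ D ∧ M.Dep C}.Finite :=
    (Set.Finite.finite_subsets (hE.subset hD.subset_ground)).subset
      (fun C hC => hC.1)
  obtain ⟨C, hC, hmin⟩ := hS.exists_minimal ⟨D, Subset.rfl, hD⟩
  refine ⟨C, hC.1, hC.2, fun D' hD' hsub => ?_⟩
  exact hmin ⟨hsub.trans hC.1, hD'⟩ hsub

/-- A set is a transversal of the circuit clutter iff its complement is independent. -/
lemma transversal_iff (N : Matroid α) (hE : N.E.Finite) (B : Set α) :
    (circuitClutter N hE).IsTransversal B ↔ B ⊆ N.E ∧ N.Indep (N.E \ B) := by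
  constructor
  · rintro ⟨hBE, hmeet⟩
    refine ⟨hBE, by_contra fun hind => ?_⟩
    have hdep : N.Dep (N.E \ B) := ⟨hind, diff_subset⟩
    obtain ⟨C, hCsub, hC⟩ := exists_circuit_subset_of_dep N hE hdep
    obtain ⟨x, hx⟩ := hmeet C hC
    exact (hCsub hx.2).2 hx.1
  · rintro ⟨hBE, hind⟩
    refine ⟨hBE, fun C hC => ?_⟩
    by_contra hempty
    rw [Set.not_nonempty_iff_eq_empty] at hempty
    have hCsub : C ⊆ N.E \ B := fun x hx =>
      ⟨hC.1.2 hx, fun hxB => (Set.eq_empty_iff_forall_notMem.mp hempty x) ⟨hxB, hx⟩⟩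
    exact hC.1.1 (hind.subset hCsub)

/-- Every base of the dual matroid is a row of the blocker of the circuit clutter. -/
lemma dual_base_mem_blocker (N : Matroid α) (hE : N.E.Finite) {B : Set α}
    (hB : N✶.IsBase B) : B ∈ ((circuitClutter N hE).blocker).rows := by
  obtain ⟨hBase, hBE⟩ := Matroid.dual_isBase_iff'.mp hB
  constructor
  · exact (transversal_iff N hE B).mpr ⟨hBE, hBase.indep⟩
  · intro C hC hCB
    obtain ⟨hCE, hCind⟩ := (transversal_iff N hE C).mp hC
    have h1 : N.E \ B ⊆ N.E \ C := diff_subset_diff_right hCB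
    have h2 : N.E \ B = N.E \ C := hBase.eq_of_subset_indep hCind h1
    have : N.E \ (N.E \ B) = N.E \ (N.E \ C) := by rw [h2]
    rw [diff_diff_cancel_left hBE, diff_diff_cancel_left hCE] at this
    exact this.symm

/-- Every element of the ground set of the dual (with girth ≥ 3) lies in some base. -/
lemma mem_dual_base (N : Matroid α) (hdual : ∀ C, (N✶).IsCircuit' C → 3 ≤ C.ncard)
    {e : α} (he : e ∈ N.E) : ∃ B, N✶.IsBase B ∧ e ∈ B := by
  by_cases hind : N✶.Indep {e}
  · obtain ⟨B, hB, hsub⟩ := hind.exists_isBase_superset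
    exact ⟨B, hB, hsub rfl⟩
  · exfalso
    have hdep : N✶.Dep {e} := ⟨hind, by simpa using he⟩
    have hcirc : N✶.IsCircuit' {e} := by
      refine ⟨hdep, fun D hD hsub => ?_⟩
      rcases Set.subset_singleton_iff_eq.mp hsub with rfl | rfl
      · exact absurd N✶.empty_indep hD.1
      · exact Subset.rfl
    have := hdual _ hcirc
    simp [Set.ncard_singleton] at this

theorem blocker_connectivity_not_invariant (N : Matroid α) (hE : N.E.Finite)
    (hnc : ¬ N.Connected)
    (hdual : ∀ C, (N✶).IsCircuit' C → 3 ≤ C.ncard) :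
    ¬ (circuitClutter N hE).Connected ∧ ((circuitClutter N hE).blocker).Connected := by
  constructor
  · -- the circuit clutter inherits a separation from the matroid
    obtain ⟨X, Y, hX, hY, hdisj, hunion, hrows⟩ := not_not.mp hnc
    intro hconn
    exact hconn ⟨X, Y, hX, hY, hdisj, hunion, fun A hA => hrows A hA⟩
  · -- the blocker (the bases of the dual) is connected
    rintro ⟨X, Y, hX, hY, hdisj, hunion, hrows⟩
    obtain ⟨x, hx⟩ := hX
    obtain ⟨y, hy⟩ := hY
    have hunion' : X ∪ Y = N.E := hunion
    have hxE : x ∈ N.E := hunion' ▸ Or.inl hx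
    have hyE : y ∈ N.E := hunion' ▸ Or.inr hy
    have hpairE : ({x, y} : Set α) ⊆ N✶.E := by
      rw [Matroid.dual_ground]
      rintro z (rfl | rfl) <;> assumption
    -- {x, y} must be dependent in the dual
    have hdep : N✶.Dep {x, y} := by
      rw [Matroid.dep_iff]
      refine ⟨fun hind => ?_, hpairE⟩
      obtain ⟨B, hB, hsub⟩ := hind.exists_isBase_superset
      rcases hrows B (dual_base_mem_blocker N hE hB) with hBX | hBY
      · exact hdisj.ne_of_mem (hBX (hsub (Or.inr rfl))) hy rfl
      · exact hdisj.ne_of_mem hx (hBY (hsub (Or.inl rfl))) rfl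
    obtain ⟨C, hCsub, hC⟩ := exists_circuit_subset_of_dep N✶ hE hdep
    have h3 := hdual C hC
    have hcard : C.ncard ≤ 2 := by
      calc C.ncard ≤ ({x, y} : Set α).ncard :=
            Set.ncard_le_ncard hCsub ((Set.finite_singleton y).insert x)
        _ ≤ 2 := Set.ncard_insert_le x {y} |>.trans (by simp)
    omega
end
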